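/- In the field ℚ(A,B,C,D,E,F,G,H,K,L)(x,y) of rational functions, the rank-two LP mutation sequence starting from the seed {(x, A y³ + B K L y² + C H K² L² y + D G H² K³ L³), (y, E x + F G H K L²)} has period eight: after eight mutations, defined successively by x_{m+1} = F_m(x_m)/x_{m−1} with the exchange polynomials obtained by the cyclic permutation (D G)(E F)(K L) followed by (A D)(B C)(F K)(G H) of coefficients at alternating steps, one returns to the original pair of cluster variables (x, y). -/
import Mathlib


set_option maxHeartbeats 2000000

open MvPolynomial in
noncomputable def N3 : MvPolynomial (Fin 12) ℚ := X 0 * X 11 ^ 3 + X 1 * X 8 * X 9 * X 11 ^ 2 + X 2 * X 7 * X 8 ^ 2 * X 9 ^ 2 * X 11 + X 3 * X 6 * X 7 ^ 2 * X 8 ^ 3 * X 9 ^ 3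

open MvPolynomial in
lemma N3_ne : N3 ≠ 0 := fun h => by
  have := congrArg (MvPolynomial.eval fun _ => (1:ℚ)) h
  norm_num [N3] at this

open MvPolynomial in
noncomputable def N4 : MvPolynomial (Fin 12) ℚ := X 0 * X 5 * X 11 ^ 3 + X 1 * X 5 * X 8 * X 9 * X 11 ^ 2 + X 2 * X 5 * X 7 * X 8 ^ 2 * X 9 ^ 2 * X 11 + X 3 * X 4 * X 7 * X 8 ^ 2 * X 9 * X 10 + X 3 * X 5 * X 6 * X 7 ^ 2 * X 8 ^ 3 * X 9 ^ 3

open MvPolynomial in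
lemma N4_ne : N4 ≠ 0 := fun h => by
  have := congrArg (MvPolynomial.eval fun _ => (1:ℚ)) h
  norm_num [N4] at this

open MvPolynomial in
noncomputable def N5 : MvPolynomial (Fin 12) ℚ := X 0 ^ 2 * X 5 ^ 3 * X 6 * X 11 ^ 6 + 2 * X 0 * X 1 * X 5 ^ 3 * X 6 * X 8 * X 9 * X 11 ^ 5 + X 0 * X 2 * X 4 * X 5 ^ 2 * X 8 * X 10 * X 11 ^ 4 + 2 * X 0 * X 2 * X 5 ^ 3 * X 6 * X 7 * X 8 ^ 2 * X 9 ^ 2 * X 11 ^ 4 + 3 * X 0 * X 3 * X 4 * X 5 ^ 2 * X 6 * X 7 * X 8 ^ 2 * X 9 * X 10 * X 11 ^ 3 + 2 * X 0 * X 3 * X 5 ^ 3 * X 6 ^ 2 * X 7 ^ 2 * X 8 ^ 3 * X 9 ^ 3 * X 11 ^ 3 + X 1 ^ 2 * X 5 ^ 3 * X 6 * X 8 ^ 2 * X 9 ^ 2 * X 11 ^ 4 + X 1 * X 2 * X 4 * X 5 ^ 2 * X 8 ^ 2 * X 9 * X 10 * X 11 ^ 3 + 2 * X 1 * X 2 *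 X 5 ^ 3 * X 6 * X 7 * X 8 ^ 3 * X 9 ^ 3 * X 11 ^ 3 + X 1 * X 3 * X 4 ^ 2 * X 5 * X 8 ^ 2 * X 10 ^ 2 * X 11 ^ 2 + 3 * X 1 * X 3 * X 4 * X 5 ^ 2 * X 6 * X 7 * X 8 ^ 3 * X 9 ^ 2 * X 10 * X 11 ^ 2 + 2 * X 1 * X 3 * X 5 ^ 3 * X 6 ^ 2 * X 7 ^ 2 * X 8 ^ 4 * X 9 ^ 4 * X 11 ^ 2 + X 2 ^ 2 * X 4 * X 5 ^ 2 * X 7 * X 8 ^ 3 * X 9 ^ 2 * X 10 * X 11 ^ 2 + X 2 ^ 2 * X 5 ^ 3 * X 6 * X 7 ^ 2 * X 8 ^ 4 * X 9 ^ 4 * X 11 ^ 2 + 2 * X 2 * X 3 * X 4 ^ 2 * X 5 * X 7 * X 8 ^ 3 * X 9 * X 10 ^ 2 * X 11 + 4 * X 2 * X 3 * X 4 * X 5 ^ 2 * X 6 * X 7 ^ 2 * X 8 ^ 4 * X 9 ^ 3 * X 10 * X 11 + 2 * X 2 * X 3 * X 5 ^ 3 * X 6 ^ 2 * X 7 ^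 3 * X 8 ^ 5 * X 9 ^ 5 * X 11 + X 3 ^ 2 * X 4 ^ 3 * X 7 * X 8 ^ 3 * X 10 ^ 3 + 3 * X 3 ^ 2 * X 4 ^ 2 * X 5 * X 6 * X 7 ^ 2 * X 8 ^ 4 * X 9 ^ 2 * X 10 ^ 2 + 3 * X 3 ^ 2 * X 4 * X 5 ^ 2 * X 6 ^ 2 * X 7 ^ 3 * X 8 ^ 5 * X 9 ^ 4 * X 10 + X 3 ^ 2 * X 5 ^ 3 * X 6 ^ 3 * X 7 ^ 4 * X 8 ^ 6 * X 9 ^ 6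

open MvPolynomial in
lemma N5_ne : N5 ≠ 0 := fun h => by
  have := congrArg (MvPolynomial.eval fun _ => (1:ℚ)) h
  norm_num [N5] at this

open MvPolynomial in
noncomputable def N6 : MvPolynomial (Fin 12) ℚ := X 0 * X 5 ^ 2 * X 6 * X 9 * X 11 ^ 3 + X 1 * X 5 ^ 2 * X 6 * X 8 * X 9 ^ 2 * X 11 ^ 2 + X 2 * X 4 * X 5 * X 8 * X 9 * X 10 * X 11 + X 2 * X 5 ^ 2 * X 6 * X 7 * X 8 ^ 2 * X 9 ^ 3 * X 11 + X 3 * X 4 ^ 2 * X 8 * X 10 ^ 2 + 2 * X 3 * X 4 * X 5 * X 6 * X 7 * X 8 ^ 2 * X 9 ^ 2 * X 10 + X 3 * X 5 ^ 2 * X 6 ^ 2 * X 7 ^ 2 * X 8 ^ 3 * X 9 ^ 4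

open MvPolynomial in
lemma N6_ne : N6 ≠ 0 := fun h => by
  have := congrArg (MvPolynomial.eval fun _ => (1:ℚ)) h
  norm_num [N6] at this

open MvPolynomial in
noncomputable def N7 : MvPolynomial (Fin 12) ℚ := X 0 * X 5 ^ 3 * X 6 ^ 2 * X 7 * X 9 ^ 3 * X 11 ^ 3 + X 1 * X 4 * X 5 ^ 2 * X 6 * X 9 ^ 2 * X 10 * X 11 ^ 2 + X 1 * X 5 ^ 3 * X 6 ^ 2 * X 7 * X 8 * X 9 ^ 4 * X 11 ^ 2 + X 2 * X 4 ^ 2 * X 5 * X 9 * X 10 ^ 2 * X 11 + 2 * X 2 * X 4 * X 5 ^ 2 * X 6 * X 7 * X 8 * X 9 ^ 3 * X 10 * X 11 + X 2 * X 5 ^ 3 * X 6 ^ 2 * X 7 ^ 2 * X 8 ^ 2 * X 9 ^ 5 * X 11 + X 3 * X 4 ^ 3 * X 10 ^ 3 + 3 * X 3 * X 4 ^ 2 * X 5 * X 6 * X 7 * X 8 * X 9 ^ 2 * X 10 ^ 2 + 3 * X 3 * X 4 * X 5 ^ 2 * X 6 ^ 2 * X 7 ^ 2 * X 8 ^ 2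 * X 9 ^ 4 * X 10 + X 3 * X 5 ^ 3 * X 6 ^ 3 * X 7 ^ 3 * X 8 ^ 3 * X 9 ^ 6

open MvPolynomial in
lemma N7_ne : N7 ≠ 0 := fun h => by
  have := congrArg (MvPolynomial.eval fun _ => (1:ℚ)) h
  norm_num [N7] at this

open MvPolynomial in
noncomputable def N8 : MvPolynomial (Fin 12) ℚ := X 4 * X 10 + X 5 * X 6 * X 7 * X 8 * X 9 ^ 2

open MvPolynomial in
lemma N8_ne : N8 ≠ 0 := fun h => by
  have := congrArg (MvPolynomial.eval fun _ => (1:ℚ)) h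
  norm_num [N8] at this


open MvPolynomial in
/-- Octagon identity for the rank-two `(b,c) = (1,3)` LP algebra of finite type.  In the field
`ℚ(A,B,C,D,E,F,G,H,K,L)(x,y)`, the rank-two LP mutation sequence starting from the seed
`{(x, Ay³+BKLy²+CHK²L²y+DGH²K³L³), (y, Ex+FGHKL²)}` has period eight: with
`x₁ = x, x₂ = y` and `x₃,…,x₈` as displayed, one has
`x₉ = (Dx₈³+CLFx₈²+BGL²F²x₈+HAG²L³F³)/x₇ = x` and `x₁₀ = (Ex₉+KHGFL²)/x₈ = y`. -/
theorem stmt8 :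
    let f := algebraMap (MvPolynomial (Fin 12) ℚ) (FractionRing (MvPolynomial (Fin 12) ℚ))
    let A := f (X 0)
    let B := f (X 1)
    let C := f (X 2)
    let D := f (X 3)
    let E := f (X 4)
    let F := f (X 5)
    let G := f (X 6)
    let H := f (X 7)
    let K := f (X 8)
    let L := f (X 9)
    let x := f (X 10)
    let y := f (X 11)
    let x3 := (A * y ^ 3 + B * K * L * y ^ 2 + C * H * K ^ 2 * L ^ 2 * y
      + D * G * H ^ 2 * K ^ 3 * L ^ 3) / x
    let x4 := (F * x3 + E * D * H * L * K ^ 2) / y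
    let x5 := (G * x4 ^ 3 + C * E * K * x4 ^ 2 + B * D * E ^ 2 * K ^ 2 * x4
      + A * H * D ^ 2 * E ^ 3 * K ^ 3) / x3
    let x6 := (L * x5 + F * A * D * K * E ^ 2) / x4
    let x7 := (H * x6 ^ 3 + B * F * E * x6 ^ 2 + C * A * F ^ 2 * E ^ 2 * x6
      + G * D * A ^ 2 * F ^ 3 * E ^ 3) / x5
    let x8 := (K * x7 + L * G * A * E * F ^ 2) / x6
    let x9 := (D * x8 ^ 3 + C * L * F * x8 ^ 2 + B * G * L ^ 2 * F ^ 2 * x8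
      + H * A * G ^ 2 * L ^ 3 * F ^ 3) / x7
    let x10 := (E * x9 + K * H * G * F * L ^ 2) / x8
    x9 = x ∧ x10 = y := by
  intro f A B C D E F G H K L x y x3 x4 x5 x6 x7 x8 x9 x10
  have hinj : Function.Injective f := IsFractionRing.injective _ _
  have hf : ∀ p : MvPolynomial (Fin 12) ℚ, p ≠ 0 → f p ≠ 0 :=
    fun p hp h => hp (hinj (h.trans (map_zero f).symm))
  have hx : f (X (10 : Fin 12)) ≠ 0 := hf _ (MvPolynomial.X_ne_zero _)
  have hy : f (X (11 : Fin 12)) ≠ 0 := hf _ (MvPolynomial.X_ne_zero _)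
  have n3 : f N3 ≠ 0 := hf _ N3_ne
  have n4 : f N4 ≠ 0 := hf _ N4_ne
  have n5 : f N5 ≠ 0 := hf _ N5_ne
  have n6 : f N6 ≠ 0 := hf _ N6_ne
  have n7 : f N7 ≠ 0 := hf _ N7_ne
  have n8 : f N8 ≠ 0 := hf _ N8_ne
  have eqA : A = f (X 0) := rfl
  have eqB : B = f (X 1) := rfl
  have eqC : C = f (X 2) := rfl
  have eqD : D = f (X 3) := rfl
  have eqE : E = f (X 4) := rfl
  have eqF : F = f (X 5) := rfl
  have eqG : G = f (X 6) := rfl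
  have eqH : H = f (X 7) := rfl
  have eqK : K = f (X 8) := rfl
  have eqL : L = f (X 9) := rfl
  have eqx : x = f (X 10) := rfl
  have eqy : y = f (X 11) := rfl
  have h3 : x3 = f N3 / (f (X (10 : Fin 12))) := by
    have d : x3 = (A * y ^ 3 + B * K * L * y ^ 2 + C * H * K ^ 2 * L ^ 2 * y + D * G * H ^ 2 * K ^ 3 * L ^ 3) / x := rfl
    rw [d]
    simp only [eqA, eqB, eqC, eqD, eqE, eqF, eqG, eqH, eqK, eqL, eqx, eqy]
    rw [div_eq_div_iff hx hx]
    field_simp [hx, hy]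
    simp only [N3, map_add, map_mul, map_pow, map_ofNat]
    try ring
  have h4 : x4 = f N4 / (f (X (10 : Fin 12)) * f (X (11 : Fin 12))) := by
    have d : x4 = (F * x3 + E * D * H * L * K ^ 2) / y := rfl
    rw [d, h3]
    simp only [eqA, eqB, eqC, eqD, eqE, eqF, eqG, eqH, eqK, eqL, eqx, eqy]
    rw [div_eq_div_iff hy (mul_ne_zero hx hy)]
    field_simp [hx, hy]
    simp only [N3, N4, map_add, map_mul, map_pow, map_ofNat]
    try ring
  have h5 : x5 = f N5 / (f (X (10 : Fin 12)) ^ 2 * f (X (11 : Fin 12)) ^ 3) := by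
    have d : x5 = (G * x4 ^ 3 + C * E * K * x4 ^ 2 + B * D * E ^ 2 * K ^ 2 * x4 + A * H * D ^ 2 * E ^ 3 * K ^ 3) / x3 := rfl
    rw [d, h3, h4]
    simp only [eqA, eqB, eqC, eqD, eqE, eqF, eqG, eqH, eqK, eqL, eqx, eqy]
    rw [div_eq_div_iff (div_ne_zero n3 hx) (mul_ne_zero (pow_ne_zero _ hx) (pow_ne_zero _ hy))]
    field_simp [hx, hy]
    simp only [N3, N4, N5, map_add, map_mul, map_pow, map_ofNat]
    try ring
  have h6 : x6 = f N6 / (f (X (10 : Fin 12)) * f (X (11 : Fin 12)) ^ 2) := by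
    have d : x6 = (L * x5 + F * A * D * K * E ^ 2) / x4 := rfl
    rw [d, h4, h5]
    simp only [eqA, eqB, eqC, eqD, eqE, eqF, eqG, eqH, eqK, eqL, eqx, eqy]
    rw [div_eq_div_iff (div_ne_zero n4 (mul_ne_zero hx hy)) (mul_ne_zero hx (pow_ne_zero _ hy))]
    field_simp [hx, hy]
    simp only [N3, N4, N5, N6, map_add, map_mul, map_pow, map_ofNat]
    try ring
  have h7 : x7 = f N7 / (f (X (10 : Fin 12)) * f (X (11 : Fin 12)) ^ 3) := by
    have d : x7 = (H * x6 ^ 3 + B * F * E * x6 ^ 2 + C * A * F ^ 2 * E ^ 2 * x6 + G * D * A ^ 2 * F ^ 3 * E ^ 3) / x5 := rfl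
    rw [d, h5, h6]
    simp only [eqA, eqB, eqC, eqD, eqE, eqF, eqG, eqH, eqK, eqL, eqx, eqy]
    rw [div_eq_div_iff (div_ne_zero n5 (mul_ne_zero (pow_ne_zero _ hx) (pow_ne_zero _ hy))) (mul_ne_zero hx (pow_ne_zero _ hy))]
    field_simp [hx, hy]
    simp only [N3, N4, N5, N6, N7, map_add, map_mul, map_pow, map_ofNat]
    try ring
  have h8 : x8 = f N8 / (f (X (11 : Fin 12))) := by
    have d : x8 = (K * x7 + L * G * A * E * F ^ 2) / x6 := rfl
    rw [d, h6, h7]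
    simp only [eqA, eqB, eqC, eqD, eqE, eqF, eqG, eqH, eqK, eqL, eqx, eqy]
    rw [div_eq_div_iff (div_ne_zero n6 (mul_ne_zero hx (pow_ne_zero _ hy))) hy]
    field_simp [hx, hy]
    simp only [N3, N4, N5, N6, N7, N8, map_add, map_mul, map_pow, map_ofNat]
    try ring
  have h9 : x9 = f (X (10 : Fin 12)) := by
    have d : x9 = (D * x8 ^ 3 + C * L * F * x8 ^ 2 + B * G * L ^ 2 * F ^ 2 * x8 + H * A * G ^ 2 * L ^ 3 * F ^ 3) / x7 := rfl
    rw [d, h7, h8]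
    simp only [eqA, eqB, eqC, eqD, eqE, eqF, eqG, eqH, eqK, eqL, eqx, eqy]
    rw [div_eq_iff (div_ne_zero n7 (mul_ne_zero hx (pow_ne_zero _ hy)))]
    field_simp [hx, hy]
    simp only [N7, N8, map_add, map_mul, map_pow, map_ofNat]
    try ring
  refine ⟨h9, ?_⟩
  have d10 : x10 = (E * x9 + K * H * G * F * L ^ 2) / x8 := rfl
  rw [d10, h9, h8]
  simp only [eqA, eqB, eqC, eqD, eqE, eqF, eqG, eqH, eqK, eqL, eqx, eqy]
  rw [div_eq_iff (div_ne_zero n8 hy)]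
  field_simp [hx, hy]
  simp only [N8, map_add, map_mul, map_pow, map_ofNat]
  try ring
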